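/- Let t, s, n be integers with s ≤ n and let x be a string of length n over an alphabet. If for all 0 ≤ i < j ≤ n−s one has d_H(x_{i+[s]}, x_{j+[s]}) > t + max{0, min{t, s − j + i}}, then for every string y with d_H(x,y) ≤ t, y is s-repeat-free (all length-s substrings of y are pairwise distinct). -/

import Mathlib

/-- The length-`s` substring of `x` starting at index `i`. -/
def substr {α : Type*} (x : ℕ → α) (i s : ℕ) : Fin s → α := fun k => x (i + k)

/-- A string of length `n` is `s`-repeat-free if all its length-`s` substrings
are pairwise distinct. -/
def repeatFree {α : Type*} (x : ℕ → α) (n s : ℕ) : Prop :=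
  ∀ i j, i + s ≤ n → j + s ≤ n → substr x i s = substr x j s → i = j

/-- Hamming distance between the length-`n` prefixes of `x` and `y`. -/
def dH {α : Type*} [DecidableEq α] (x y : ℕ → α) (n : ℕ) : ℕ :=
  ((Finset.range n).filter (fun i => x i ≠ y i)).card

lemma card_window {α : Type*} [DecidableEq α] (x y : ℕ → α) (i s : ℕ) :
    hammingDist (substr x i s) (substr y i s)
      = ((Finset.Ico i (i+s)).filter (fun k => x k ≠ y k)).card := by
  rw [hammingDist]
  refine Finset.card_bij (fun k _ => i + (k : ℕ)) ?_ ?_ ?_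
  · intro k hk
    simp only [Finset.mem_filter, Finset.mem_univ, true_and] at hk
    simp only [substr] at hk
    simp only [Finset.mem_filter, Finset.mem_Ico]
    exact ⟨⟨Nat.le_add_right _ _, by omega⟩, hk⟩
  · intro a _ b _ h
    exact Fin.ext (by omega)
  · intro b hb
    simp only [Finset.mem_filter, Finset.mem_Ico] at hb
    refine ⟨⟨b - i, by omega⟩, ?_, by simp; omega⟩
    simp only [Finset.mem_filter, Finset.mem_univ, true_and]
    simp only [substr]
    have : i + (b - i) = b := by omega
    rw [this]
    exact hb.2

/-- if all pairs of length-`s` windows of `x` are at Hamming distance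
greater than `t + max{0, min{t, s - (j - i)}}`, then every `y` within Hamming
distance `t` of `x` is `s`-repeat-free. -/
theorem stmt4 {α : Type*} [DecidableEq α] (n t s : ℕ) (hs : s ≤ n)
    (x : ℕ → α)
    (hx : ∀ i j, i < j → j + s ≤ n →
      t + max 0 (min t (s - (j - i))) < hammingDist (substr x i s) (substr x j s)) :
    ∀ y : ℕ → α, dH x y n ≤ t → repeatFree y n s := by
  intro y hy
  have key : ∀ i j, i < j → i + s ≤ n → j + s ≤ n → substr y i s ≠ substr y j s := by
    intro i j hij hi hj heq
    have hx' := hx i j hij hj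
    set A : Finset ℕ := (Finset.range n).filter (fun k => x k ≠ y k) with hAdef
    have hA : A.card ≤ t := hy
    set Ai : Finset ℕ := (Finset.Ico i (i+s)).filter (fun k => x k ≠ y k) with hAidef
    set Aj : Finset ℕ := (Finset.Ico j (j+s)).filter (fun k => x k ≠ y k) with hAjdef
    have hsubi : Ai ⊆ A := by
      intro k hk
      simp only [hAidef, hAdef, Finset.mem_filter, Finset.mem_Ico, Finset.mem_range] at *
      exact ⟨by omega, hk.2⟩
    have hsubj : Aj ⊆ A := by
      intro k hk
      simp only [hAjdef, hAdef, Finset.mem_filter, Finset.mem_Ico, Finset.mem_range] at *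
      exact ⟨by omega, hk.2⟩
    have hunion : (Ai ∪ Aj).card ≤ t :=
      le_trans (Finset.card_le_card (Finset.union_subset hsubi hsubj)) hA
    have hinter1 : (Ai ∩ Aj).card ≤ t :=
      le_trans (Finset.card_le_card (le_trans Finset.inter_subset_left hsubi)) hA
    have hinter2 : (Ai ∩ Aj).card ≤ s - (j - i) := by
      have hsub : Ai ∩ Aj ⊆ Finset.Ico j (i + s) := by
        intro k hk
        simp only [Finset.mem_inter, hAidef, hAjdef, Finset.mem_filter, Finset.mem_Ico] at hk
        simp only [Finset.mem_Ico]
        omega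
      have := Finset.card_le_card hsub
      rw [Nat.card_Ico] at this
      omega
    have hcards : (Ai ∪ Aj).card + (Ai ∩ Aj).card = Ai.card + Aj.card :=
      Finset.card_union_add_card_inter Ai Aj
    have htri : hammingDist (substr x i s) (substr x j s) ≤ Ai.card + Aj.card := by
      calc hammingDist (substr x i s) (substr x j s)
          ≤ hammingDist (substr x i s) (substr y i s)
            + hammingDist (substr y i s) (substr x j s) := hammingDist_triangle _ _ _
        _ = hammingDist (substr x i s) (substr y i s)
            + hammingDist (substr x j s) (substr y j s) := by
            rw [show hammingDist (substr y i s) (substr x j s)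
                = hammingDist (substr x j s) (substr y j s) from by
              rw [heq, hammingDist_comm]]
        _ = Ai.card + Aj.card := by rw [card_window, card_window]
    omega
  intro i j hi hj heq
  by_contra hne
  rcases lt_or_gt_of_ne hne with h | h
  · exact key i j h hi hj heq
  · exact key j i h hj hi heq.symm
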